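/- Let f₁, f₂ : ℝⁿ → ℝ be differentiable, σ₁- and σ₂-strongly convex with distinct minimizers x₁*, x₂*, and suppose x ∉ {x₁*, x₂*} is a minimizer of f₁ + f₂ with ‖∇f₁(x)‖ = ‖∇f₂(x)‖ ≤ L. Define φ̃ᵢ(x) = arccos((σᵢ/L)‖x - xᵢ*‖) and let ψ(x) be the angle between the vectors x - x₁* and -(x - x₂*). Then φ̃₁(x) + φ̃₂(x) ≥ ψ(x). -/

import Mathlib

open InnerProductGeometry Real

private lemma my_arccos_anti {a b : ℝ} (h : a ≤ b) : Real.arccos b ≤ Real.arccos a := by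
  unfold Real.arccos
  have := Real.monotone_arcsin h
  linarith

section Aux
variable {V : Type*} [NormedAddCommGroup V] [InnerProductSpace ℝ V]

private lemma my_key (x y z : V) (hy : y ≠ 0) :
    (inner ℝ x y : ℝ) * inner ℝ y z -
      Real.sqrt ((‖x‖ ^ 2 * ‖y‖ ^ 2 - (inner ℝ x y : ℝ) * inner ℝ x y) *
        (‖y‖ ^ 2 * ‖z‖ ^ 2 - (inner ℝ y z : ℝ) * inner ℝ y z)) ≤ (inner ℝ x z : ℝ) * ‖y‖ ^ 2 := by
  set p : ℝ := inner ℝ x y with hp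
  set q : ℝ := inner ℝ y z with hq
  set u : V := (‖y‖ ^ 2) • x - p • y with hu'
  set v : V := (‖y‖ ^ 2) • z - q • y with hv'
  have hyy : (inner ℝ y y : ℝ) = ‖y‖ ^ 2 := real_inner_self_eq_norm_sq y
  have hxx : (inner ℝ x x : ℝ) = ‖x‖ ^ 2 := real_inner_self_eq_norm_sq x
  have hzz : (inner ℝ z z : ℝ) = ‖z‖ ^ 2 := real_inner_self_eq_norm_sq z
  have hxz : (inner ℝ z x : ℝ) = inner ℝ x z := real_inner_comm x z
  have hyx : (inner ℝ y x : ℝ) = p := real_inner_comm x y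
  have hzy : (inner ℝ z y : ℝ) = q := real_inner_comm y z
  have h1 : (inner ℝ u v : ℝ) = ‖y‖ ^ 2 * ((inner ℝ x z : ℝ) * ‖y‖ ^ 2 - p * q) := by
    simp only [hu', hv', inner_sub_left, inner_sub_right, real_inner_smul_left,
      real_inner_smul_right, hyy, hxz, hyx, hzy]
    ring
  have h2 : ‖u‖ ^ 2 = ‖y‖ ^ 2 * (‖x‖ ^ 2 * ‖y‖ ^ 2 - p * p) := by
    rw [← real_inner_self_eq_norm_sq]
    simp only [hu', inner_sub_left, inner_sub_right, real_inner_smul_left,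
      real_inner_smul_right, hyy, hxx, hyx]
    ring
  have h3 : ‖v‖ ^ 2 = ‖y‖ ^ 2 * (‖y‖ ^ 2 * ‖z‖ ^ 2 - q * q) := by
    rw [← real_inner_self_eq_norm_sq]
    simp only [hv', inner_sub_left, inner_sub_right, real_inner_smul_left,
      real_inner_smul_right, hyy, hzz, hzy]
    ring
  have hy2 : (0:ℝ) < ‖y‖ ^ 2 := by
    have : (0:ℝ) < ‖y‖ := norm_pos_iff.mpr hy
    positivity
  have hA : 0 ≤ ‖x‖ ^ 2 * ‖y‖ ^ 2 - p * p := by nlinarith [sq_nonneg ‖u‖]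
  have hB : 0 ≤ ‖y‖ ^ 2 * ‖z‖ ^ 2 - q * q := by nlinarith [sq_nonneg ‖v‖]
  have hu : ‖u‖ = ‖y‖ * Real.sqrt (‖x‖ ^ 2 * ‖y‖ ^ 2 - p * p) := by
    rw [← Real.sqrt_sq (norm_nonneg u), h2, ← Real.sqrt_sq (norm_nonneg y),
      ← Real.sqrt_mul (by positivity), Real.sqrt_sq (norm_nonneg y)]
  have hv : ‖v‖ = ‖y‖ * Real.sqrt (‖y‖ ^ 2 * ‖z‖ ^ 2 - q * q) := by
    rw [← Real.sqrt_sq (norm_nonneg v), h3, ← Real.sqrt_sq (norm_nonneg y),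
      ← Real.sqrt_mul (by positivity), Real.sqrt_sq (norm_nonneg y)]
  have hcs : -(‖u‖ * ‖v‖) ≤ (inner ℝ u v : ℝ) := neg_le_of_abs_le (abs_real_inner_le_norm u v)
  rw [h1, hu, hv] at hcs
  rw [Real.sqrt_mul hA]
  nlinarith [hcs]

private lemma my_angle_triangle (x y z : V) : angle x z ≤ angle x y + angle y z := by
  by_cases hy : y = 0
  · subst hy
    have := angle_le_pi x z
    rw [angle_zero_right, angle_zero_left]
    linarith
  by_cases hx : x = 0
  · rw [hx, angle_zero_left, angle_zero_left]
    have := angle_nonneg y z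
    linarith
  by_cases hz : z = 0
  · rw [hz, angle_zero_right, angle_zero_right]
    have := angle_nonneg x y
    linarith
  by_cases hpi : π ≤ angle x y + angle y z
  · linarith [angle_le_pi x z]
  push_neg at hpi
  have hsum0 : 0 ≤ angle x y + angle y z := by
    have := angle_nonneg x y; have := angle_nonneg y z; linarith
  have hnx : (0:ℝ) < ‖x‖ := norm_pos_iff.mpr hx
  have hny : (0:ℝ) < ‖y‖ := norm_pos_iff.mpr hy
  have hnz : (0:ℝ) < ‖z‖ := norm_pos_iff.mpr hz
  have hposyy : (0:ℝ) < (‖x‖ * ‖y‖) * (‖y‖ * ‖z‖) := by positivity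
  have hcos : Real.cos (angle x y + angle y z) ≤ Real.cos (angle x z) := by
    rw [Real.cos_add]
    have c1 := cos_angle_mul_norm_mul_norm x y
    have c2 := cos_angle_mul_norm_mul_norm y z
    have c3 := cos_angle_mul_norm_mul_norm x z
    have s1 := sin_angle_mul_norm_mul_norm x y
    have s2 := sin_angle_mul_norm_mul_norm y z
    rw [real_inner_self_eq_norm_sq x, real_inner_self_eq_norm_sq y] at s1
    rw [real_inner_self_eq_norm_sq y, real_inner_self_eq_norm_sq z] at s2
    apply le_of_mul_le_mul_right _ hposyy
    have expand : (Real.cos (angle x y) * Real.cos (angle y z) -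
        Real.sin (angle x y) * Real.sin (angle y z)) * ((‖x‖ * ‖y‖) * (‖y‖ * ‖z‖)) =
        (Real.cos (angle x y) * (‖x‖ * ‖y‖)) * (Real.cos (angle y z) * (‖y‖ * ‖z‖)) -
        (Real.sin (angle x y) * (‖x‖ * ‖y‖)) * (Real.sin (angle y z) * (‖y‖ * ‖z‖)) := by
      ring
    have expand2 : Real.cos (angle x z) * ((‖x‖ * ‖y‖) * (‖y‖ * ‖z‖)) =
        (Real.cos (angle x z) * (‖x‖ * ‖z‖)) * ‖y‖ ^ 2 := by ring
    rw [expand, expand2, c1, c2, c3, s1, s2, ← Real.sqrt_mul]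
    · exact my_key x y z hy
    · have h := abs_real_inner_le_norm x y
      nlinarith [abs_nonneg ((inner ℝ x y : ℝ)), sq_abs ((inner ℝ x y : ℝ))]
  calc angle x z = Real.arccos (Real.cos (angle x z)) :=
        (Real.arccos_cos (angle_nonneg x z) (angle_le_pi x z)).symm
    _ ≤ Real.arccos (Real.cos (angle x y + angle y z)) := my_arccos_anti hcos
    _ = angle x y + angle y z := Real.arccos_cos hsum0 (le_of_lt hpi)

private lemma my_angle_le_arccos {u g : V} {c : ℝ} (hu : u ≠ 0) (hg : g ≠ 0)
    (hc : c * (‖u‖ * ‖g‖) ≤ (inner ℝ u g : ℝ)) : angle u g ≤ Real.arccos c := by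
  have hpos : (0:ℝ) < ‖u‖ * ‖g‖ := by
    have := norm_pos_iff.mpr hu; have := norm_pos_iff.mpr hg; positivity
  unfold InnerProductGeometry.angle
  apply my_arccos_anti
  rw [le_div_iff₀ hpos]
  exact hc
end Aux

/-- A differentiable function `f : ℝⁿ → ℝ` is `σ`-strongly convex if
`⟨∇f(x) - ∇f(y), x - y⟩ ≥ σ‖x - y‖²` for all `x, y`. -/
def StronglyConvex {n : ℕ} (σ : ℝ) (f : EuclideanSpace ℝ (Fin n) → ℝ) : Prop :=
  ∀ x y : EuclideanSpace ℝ (Fin n),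
    σ * ‖x - y‖ ^ 2 ≤ (inner ℝ (gradient f x - gradient f y) (x - y) : ℝ)

/-- Let `f₁, f₂ : ℝⁿ → ℝ` be differentiable, `σ₁`- and `σ₂`-strongly convex with
distinct minimizers `x₁*, x₂*`, and suppose `x ∉ {x₁*, x₂*}` is a minimizer of `f₁ + f₂`
with `‖∇f₁(x)‖ = ‖∇f₂(x)‖ ≤ L`.  With `φ̃ᵢ(x) = arccos((σᵢ/L)‖x - xᵢ*‖)` and `ψ(x)` the
angle between `x - x₁*` and `-(x - x₂*)`, we have `φ̃₁(x) + φ̃₂(x) ≥ ψ(x)`. -/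
theorem stmt_5 {n : ℕ} (σ₁ σ₂ L : ℝ) (h1 : 0 < σ₁) (h2 : 0 < σ₂) (hL : 0 < L)
    (f₁ f₂ : EuclideanSpace ℝ (Fin n) → ℝ)
    (hd1 : Differentiable ℝ f₁) (hd2 : Differentiable ℝ f₂)
    (hc1 : StronglyConvex σ₁ f₁) (hc2 : StronglyConvex σ₂ f₂)
    (x₁s x₂s : EuclideanSpace ℝ (Fin n)) (hne : x₁s ≠ x₂s)
    (hm1 : gradient f₁ x₁s = 0) (hm2 : gradient f₂ x₂s = 0)
    (x : EuclideanSpace ℝ (Fin n)) (hx1 : x ≠ x₁s) (hx2 : x ≠ x₂s)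
    (hgrad : gradient f₁ x = -gradient f₂ x)
    (hbound : ‖gradient f₁ x‖ ≤ L) :
    InnerProductGeometry.angle (x - x₁s) (-(x - x₂s)) ≤
      Real.arccos (σ₁ / L * ‖x - x₁s‖) + Real.arccos (σ₂ / L * ‖x - x₂s‖) := by
  set g := gradient f₁ x with hgdef
  have hg2 : gradient f₂ x = -g := by rw [hgrad, neg_neg]
  have hc1' := hc1 x x₁s
  rw [hm1, sub_zero, ← hgdef] at hc1'
  have hc2' := hc2 x x₂s
  rw [hm2, sub_zero, hg2] at hc2'
  have hu1 : x - x₁s ≠ 0 := sub_ne_zero.mpr hx1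
  have hu2 : x - x₂s ≠ 0 := sub_ne_zero.mpr hx2
  have hn1 : (0:ℝ) < ‖x - x₁s‖ := norm_pos_iff.mpr hu1
  have hn2 : (0:ℝ) < ‖x - x₂s‖ := norm_pos_iff.mpr hu2
  have hgne : g ≠ 0 := by
    intro h
    rw [h] at hc1'
    simp only [inner_zero_left] at hc1'
    nlinarith [mul_pos h1 (mul_pos hn1 hn1), sq_nonneg ‖x - x₁s‖]
  have hgL : ‖g‖ ≤ L := hbound
  have ha1 : InnerProductGeometry.angle (x - x₁s) g ≤ Real.arccos (σ₁ / L * ‖x - x₁s‖) := by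
    apply my_angle_le_arccos hu1 hgne
    rw [real_inner_comm, div_mul_eq_mul_div, div_mul_eq_mul_div, div_le_iff₀ hL]
    nlinarith [mul_le_mul_of_nonneg_left hgL (by positivity : (0:ℝ) ≤ σ₁ * ‖x - x₁s‖ ^ 2),
      mul_le_mul_of_nonneg_right hc1' hL.le]
  have ha2 : InnerProductGeometry.angle g (-(x - x₂s)) ≤ Real.arccos (σ₂ / L * ‖x - x₂s‖) := by
    apply my_angle_le_arccos hgne (neg_ne_zero.mpr hu2)
    have hin : (inner ℝ g (-(x - x₂s)) : ℝ) = inner ℝ (-g) (x - x₂s) := by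
      rw [inner_neg_right, inner_neg_left]
    rw [hin, norm_neg, div_mul_eq_mul_div, div_mul_eq_mul_div, div_le_iff₀ hL]
    nlinarith [mul_le_mul_of_nonneg_left hgL (by positivity : (0:ℝ) ≤ σ₂ * ‖x - x₂s‖ ^ 2),
      mul_le_mul_of_nonneg_right hc2' hL.le]
  calc InnerProductGeometry.angle (x - x₁s) (-(x - x₂s))
      ≤ InnerProductGeometry.angle (x - x₁s) g + InnerProductGeometry.angle g (-(x - x₂s)) :=
        my_angle_triangle _ _ _
    _ ≤ Real.arccos (σ₁ / L * ‖x - x₁s‖) + Real.arccos (σ₂ / L * ‖x - x₂s‖) :=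
        add_le_add ha1 ha2
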